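/- In the setting of the bifurcating branch above (assuming additionally that the curve is C²), the second derivative of the chemical potential at the bifurcation point satisfies μ''(0) · Σ_j (ψ^n_j)² = 2 Σ_j (ψ^n_j)⁴; in particular μ''(0) > 0, so the branch is locally concave up. -/

import Mathlib

/-- The discrete Schrödinger operator with harmonic potential. -/
noncomputable def discT (α Ω : ℝ) (ψ : ℤ → ℝ) (j : ℤ) : ℝ :=
  -(1 / (2 * α ^ 2)) * (ψ (j + 1) - 2 * ψ j + ψ (j - 1))
    + (1 / 2) * Ω ^ 2 * (α * (j : ℝ)) ^ 2 * ψ j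

private lemma aux_shift (a b : ℤ) (f : ℤ → ℝ) :
    ∑ j ∈ Finset.Icc a b, f (j + 1) = ∑ j ∈ Finset.Icc (a + 1) (b + 1), f j := by
  rw [← Finset.map_add_right_Icc a b 1, Finset.sum_map]
  rfl

private lemma aux_transfer (K : ℤ) (hK : 1 ≤ K) (g : ℤ → ℝ) (h1 : g 1 = 0)
    (h2 : g (K + 1) = 0) :
    ∑ j ∈ Finset.Icc 2 (K + 1), g j = ∑ j ∈ Finset.Icc 1 K, g j := by
  have e1 : Finset.Icc (1 : ℤ) (K + 1) = insert 1 (Finset.Icc 2 (K + 1)) := by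
    ext x; simp only [Finset.mem_Icc, Finset.mem_insert]; omega
  have e2 : Finset.Icc (1 : ℤ) (K + 1) = insert (K + 1) (Finset.Icc 1 K) := by
    ext x; simp only [Finset.mem_Icc, Finset.mem_insert]; omega
  have n1 : (1 : ℤ) ∉ Finset.Icc 2 (K + 1) := by simp
  have n2 : K + 1 ∉ Finset.Icc (1 : ℤ) K := by simp
  calc ∑ j ∈ Finset.Icc 2 (K + 1), g j
      = g 1 + ∑ j ∈ Finset.Icc 2 (K + 1), g j := by rw [h1]; ring
    _ = ∑ j ∈ Finset.Icc 1 (K + 1), g j := by rw [e1, Finset.sum_insert n1]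
    _ = g (K + 1) + ∑ j ∈ Finset.Icc 1 K, g j := by rw [e2, Finset.sum_insert n2]
    _ = ∑ j ∈ Finset.Icc 1 K, g j := by rw [h2]; ring

private lemma aux_shiftL (K : ℤ) (hK : 1 ≤ K) (u v : ℤ → ℝ) (hu0 : u 0 = 0)
    (hvK : v (K + 1) = 0) :
    ∑ j ∈ Finset.Icc 1 K, u j * v (j + 1) = ∑ j ∈ Finset.Icc 1 K, u (j - 1) * v j := by
  have h := aux_shift 1 K (fun j => u (j - 1) * v j)
  simp only [add_sub_cancel_right] at h
  rw [h]
  exact aux_transfer K hK _ (by simp [hu0]) (by simp [hvK])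

private lemma aux_sym (K : ℤ) (hK : 1 ≤ K) (α Ω : ℝ) (u v : ℤ → ℝ)
    (hu0 : u 0 = 0) (huK : u (K + 1) = 0) (hv0 : v 0 = 0) (hvK : v (K + 1) = 0) :
    ∑ j ∈ Finset.Icc 1 K, u j * discT α Ω v j
      = ∑ j ∈ Finset.Icc 1 K, v j * discT α Ω u j := by
  have key : ∀ w z : ℤ → ℝ, ∑ j ∈ Finset.Icc 1 K, w j * discT α Ω z j
      = (-(1 / (2 * α ^ 2))) * ∑ j ∈ Finset.Icc 1 K, w j * z (j + 1)
        + (-(1 / (2 * α ^ 2))) * ∑ j ∈ Finset.Icc 1 K, w j * z (j - 1)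
        + ∑ j ∈ Finset.Icc 1 K,
            (1 / α ^ 2 + (1 / 2) * Ω ^ 2 * (α * (j : ℝ)) ^ 2) * (w j * z j) := by
    intro w z
    rw [Finset.mul_sum, Finset.mul_sum, ← Finset.sum_add_distrib, ← Finset.sum_add_distrib]
    refine Finset.sum_congr rfl fun j _ => ?_
    simp only [discT]; ring
  rw [key u v, key v u, aux_shiftL K hK u v hu0 hvK, aux_shiftL K hK v u hv0 huK]
  have e1 : ∑ j ∈ Finset.Icc 1 K, u (j - 1) * v j
      = ∑ j ∈ Finset.Icc 1 K, v j * u (j - 1) :=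
    Finset.sum_congr rfl fun j _ => mul_comm _ _
  have e2 : ∑ j ∈ Finset.Icc 1 K, u j * v (j - 1)
      = ∑ j ∈ Finset.Icc 1 K, v (j - 1) * u j :=
    Finset.sum_congr rfl fun j _ => mul_comm _ _
  have e3 : ∑ j ∈ Finset.Icc 1 K,
        (1 / α ^ 2 + (1 / 2) * Ω ^ 2 * (α * (j : ℝ)) ^ 2) * (u j * v j)
      = ∑ j ∈ Finset.Icc 1 K,
        (1 / α ^ 2 + (1 / 2) * Ω ^ 2 * (α * (j : ℝ)) ^ 2) * (v j * u j) :=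
    Finset.sum_congr rfl fun j _ => by ring
  rw [e1, e2, e3]
  ring

private lemma aux_calc (μ A B : ℝ → ℝ) (En : ℝ)
    (hμ : ContDiff ℝ 2 μ) (hA : ContDiff ℝ 2 A) (hB : ContDiff ℝ 2 B)
    (hμ0 : μ 0 = En) (hμ'0 : deriv μ 0 = 0)
    (hg : ∀ s, (μ s - En) * A s = s ^ 2 * B s) :
    deriv (deriv μ) 0 * A 0 = 2 * B 0 := by
  have hd : ∀ f : ℝ → ℝ, ContDiff ℝ 2 f →
      Differentiable ℝ f ∧ Differentiable ℝ (deriv f) := by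
    intro f hf
    have h2 : ContDiff ℝ ((1 : WithTop ℕ∞) + 1) f := by norm_num; exact hf
    exact ⟨h2.differentiable (by norm_num),
      ((contDiff_succ_iff_deriv.mp h2).2.2).differentiable one_ne_zero⟩
  obtain ⟨hμd, hμ'd⟩ := hd μ hμ
  obtain ⟨hAd, hA'd⟩ := hd A hA
  obtain ⟨hBd, hB'd⟩ := hd B hB
  -- first-derivative identity, valid for every s
  have hD : ∀ s, deriv μ s * A s + (μ s - En) * deriv A s
      - (2 * s * B s + s ^ 2 * deriv B s) = 0 := by
    intro s
    have h1 : HasDerivAt (fun t => (μ t - En) * A t)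
        (deriv μ s * A s + (μ s - En) * deriv A s) s :=
      ((hμd s).hasDerivAt.sub_const En).mul (hAd s).hasDerivAt
    have h2 : HasDerivAt (fun t => t ^ 2 * B t)
        (2 * s * B s + s ^ 2 * deriv B s) s := by
      have h : HasDerivAt (fun t => t ^ 2 * B t)
          ((↑2 : ℝ) * s ^ (2 - 1) * B s + s ^ 2 * deriv B s) s :=
        (hasDerivAt_pow 2 s).mul (hBd s).hasDerivAt
      convert h using 1
      push_cast
      ring
    have h3 : HasDerivAt (fun t => (μ t - En) * A t)
        (2 * s * B s + s ^ 2 * deriv B s) s := by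
      have he : (fun t => (μ t - En) * A t) = fun t => t ^ 2 * B t := funext hg
      rw [he]; exact h2
    have := h1.unique h3
    linarith
  -- differentiate the identity at 0
  have t1 : HasDerivAt (fun s => deriv μ s * A s)
      (deriv (deriv μ) 0 * A 0 + deriv μ 0 * deriv A 0) 0 :=
    (hμ'd 0).hasDerivAt.mul (hAd 0).hasDerivAt
  have t2 : HasDerivAt (fun s => (μ s - En) * deriv A s)
      (deriv μ 0 * deriv A 0 + (μ 0 - En) * deriv (deriv A) 0) 0 :=
    ((hμd 0).hasDerivAt.sub_const En).mul (hA'd 0).hasDerivAt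
  have t3 : HasDerivAt (fun s : ℝ => 2 * s) 2 0 := by
    simpa using (hasDerivAt_id (0 : ℝ)).const_mul 2
  have t4 : HasDerivAt (fun s : ℝ => 2 * s * B s)
      (2 * B 0 + 2 * 0 * deriv B 0) 0 := t3.mul (hBd 0).hasDerivAt
  have t5 : HasDerivAt (fun s : ℝ => s ^ 2 * deriv B s)
      ((↑2 : ℝ) * 0 ^ (2 - 1) * deriv B 0 + 0 ^ 2 * deriv (deriv B) 0) 0 :=
    (hasDerivAt_pow 2 (0 : ℝ)).mul (hB'd 0).hasDerivAt
  have hL := (t1.add t2).sub (t4.add t5)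
  have hfun : (fun s => deriv μ s * A s + (μ s - En) * deriv A s
      - (2 * s * B s + s ^ 2 * deriv B s)) = fun _ : ℝ => (0 : ℝ) := funext hD
  have hL' : HasDerivAt (fun _ : ℝ => (0 : ℝ))
      ((deriv (deriv μ) 0 * A 0 + deriv μ 0 * deriv A 0)
        + (deriv μ 0 * deriv A 0 + (μ 0 - En) * deriv (deriv A) 0)
        - ((2 * B 0 + 2 * 0 * deriv B 0)
          + ((↑2 : ℝ) * 0 ^ (2 - 1) * deriv B 0 + 0 ^ 2 * deriv (deriv B) 0))) 0 := by
    rw [← hfun]; exact hL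
  have hv := hL'.unique (hasDerivAt_const 0 0)
  rw [hμ0, hμ'0] at hv
  linear_combination hv

/-- along the C² bifurcating branch `ψ(s) = s(ψⁿ + χ(s))` of solutions of
the stationary DNLS `Tψ + ψ³ = μψ`, the second derivative of the chemical potential
satisfies `μ''(0)·Σ(ψⁿ_j)² = 2·Σ(ψⁿ_j)⁴`; in particular `μ''(0) > 0`. -/
theorem stmt3 (K : ℕ) (hK : 1 ≤ K) (α Ω : ℝ) (hα : 0 < α) (hΩ : 0 < Ω)
    (En : ℝ) (ψn : ℤ → ℝ)
    (hψn0 : ψn 0 = 0) (hψnK : ψn ((K : ℤ) + 1) = 0)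
    (heig : ∀ j ∈ Finset.Icc (1 : ℤ) (K : ℤ), discT α Ω ψn j = En * ψn j)
    (hψnne : ∑ j ∈ Finset.Icc (1 : ℤ) (K : ℤ), (ψn j) ^ 2 ≠ 0)
    (μ : ℝ → ℝ) (χ : ℝ → ℤ → ℝ)
    (hμC2 : ContDiff ℝ 2 μ)
    (hχC2 : ∀ j : ℤ, ContDiff ℝ 2 (fun s => χ s j))
    (hχ0 : χ 0 = 0) (hμ0 : μ 0 = En) (hμ'0 : deriv μ 0 = 0)
    (hχb0 : ∀ s, χ s 0 = 0) (hχbK : ∀ s, χ s ((K : ℤ) + 1) = 0)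
    (hsol : ∀ s : ℝ, ∀ j ∈ Finset.Icc (1 : ℤ) (K : ℤ),
      discT α Ω (fun i => s * (ψn i + χ s i)) j + (s * (ψn j + χ s j)) ^ 3
        = μ s * (s * (ψn j + χ s j))) :
    deriv (deriv μ) 0 * ∑ j ∈ Finset.Icc (1 : ℤ) (K : ℤ), (ψn j) ^ 2
        = 2 * ∑ j ∈ Finset.Icc (1 : ℤ) (K : ℤ), (ψn j) ^ 4
      ∧ 0 < deriv (deriv μ) 0 := by
  have hK' : (1 : ℤ) ≤ (K : ℤ) := by exact_mod_cast hK
  set S := Finset.Icc (1 : ℤ) (K : ℤ) with hS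
  -- the key summed identity
  have key : ∀ s : ℝ, (μ s - En) * (∑ j ∈ S, (ψn j + χ s j) * ψn j)
      = s ^ 2 * (∑ j ∈ S, (ψn j + χ s j) ^ 3 * ψn j) := by
    intro s
    rcases eq_or_ne s 0 with rfl | hs
    · simp [hμ0]
    · have hsym : ∑ j ∈ S, ψn j * discT α Ω (fun i => s * (ψn i + χ s i)) j
          = ∑ j ∈ S, s * (ψn j + χ s j) * discT α Ω ψn j :=
        aux_sym (K : ℤ) hK' α Ω ψn (fun i => s * (ψn i + χ s i)) hψn0 hψnK
          (by simp [hψn0, hχb0]) (by simp [hψnK, hχbK])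
      have h2 : ∑ j ∈ S, s * (ψn j + χ s j) * discT α Ω ψn j
          = ∑ j ∈ S, s * (ψn j + χ s j) * (En * ψn j) :=
        Finset.sum_congr rfl fun j hj => by rw [heig j hj]
      have h3 : ∑ j ∈ S, ψn j * discT α Ω (fun i => s * (ψn i + χ s i)) j
          = ∑ j ∈ S, ψn j * (μ s * (s * (ψn j + χ s j)) - (s * (ψn j + χ s j)) ^ 3) :=
        Finset.sum_congr rfl fun j hj => by linear_combination ψn j * hsol s j hj
      have h4 : ∑ j ∈ S, ψn j * (μ s * (s * (ψn j + χ s j)) - (s * (ψn j + χ s j)) ^ 3)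
          = ∑ j ∈ S, s * (ψn j + χ s j) * (En * ψn j) := by
        rw [← h3, hsym, h2]
      have h5 : ∑ j ∈ S,
          (ψn j * (μ s * (s * (ψn j + χ s j)) - (s * (ψn j + χ s j)) ^ 3)
            - s * (ψn j + χ s j) * (En * ψn j)) = 0 := by
        rw [Finset.sum_sub_distrib, h4, sub_self]
      have h6 : ∑ j ∈ S,
          (ψn j * (μ s * (s * (ψn j + χ s j)) - (s * (ψn j + χ s j)) ^ 3)
            - s * (ψn j + χ s j) * (En * ψn j))
          = (s * (μ s - En)) * (∑ j ∈ S, (ψn j + χ s j) * ψn j)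
            - (s * s ^ 2) * (∑ j ∈ S, (ψn j + χ s j) ^ 3 * ψn j) := by
        rw [Finset.mul_sum, Finset.mul_sum, ← Finset.sum_sub_distrib]
        exact Finset.sum_congr rfl fun j _ => by ring
      have h7 : s * ((μ s - En) * (∑ j ∈ S, (ψn j + χ s j) * ψn j))
          = s * (s ^ 2 * (∑ j ∈ S, (ψn j + χ s j) ^ 3 * ψn j)) := by
        linear_combination h5 - h6
      exact mul_left_cancel₀ hs h7
  -- regularity of the coefficient functions
  have hA : ContDiff ℝ 2 (fun s => ∑ j ∈ S, (ψn j + χ s j) * ψn j) :=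
    ContDiff.sum fun j _ => (contDiff_const.add (hχC2 j)).mul contDiff_const
  have hB : ContDiff ℝ 2 (fun s => ∑ j ∈ S, (ψn j + χ s j) ^ 3 * ψn j) :=
    ContDiff.sum fun j _ => ((contDiff_const.add (hχC2 j)).pow 3).mul contDiff_const
  have hmain := aux_calc μ (fun s => ∑ j ∈ S, (ψn j + χ s j) * ψn j)
    (fun s => ∑ j ∈ S, (ψn j + χ s j) ^ 3 * ψn j) En hμC2 hA hB hμ0 hμ'0 key
  have hA0 : ∑ j ∈ S, (ψn j + χ 0 j) * ψn j = ∑ j ∈ S, (ψn j) ^ 2 :=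
    Finset.sum_congr rfl fun j _ => by rw [hχ0]; simp; ring
  have hB0 : ∑ j ∈ S, (ψn j + χ 0 j) ^ 3 * ψn j = ∑ j ∈ S, (ψn j) ^ 4 :=
    Finset.sum_congr rfl fun j _ => by rw [hχ0]; simp; ring
  beta_reduce at hmain
  rw [hA0, hB0] at hmain
  -- positivity
  have hSA : 0 < ∑ j ∈ S, (ψn j) ^ 2 :=
    lt_of_le_of_ne (Finset.sum_nonneg fun j _ => sq_nonneg _) (Ne.symm hψnne)
  have hSB : 0 < ∑ j ∈ S, (ψn j) ^ 4 := by
    rcases lt_or_eq_of_le (Finset.sum_nonneg fun j _ =>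
        (by positivity : (0:ℝ) ≤ (ψn j) ^ 4)) with h | h
    · exact h
    · exfalso
      apply hψnne
      apply Finset.sum_eq_zero
      intro j hj
      have hz := (Finset.sum_eq_zero_iff_of_nonneg
        (fun j _ => (by positivity : (0:ℝ) ≤ (ψn j) ^ 4))).mp h.symm j hj
      have : ψn j = 0 := by
        have := pow_eq_zero_iff (n := 4) (by norm_num) |>.mp hz
        exact this
      simp [this]
  refine ⟨hmain, ?_⟩
  have hμ'' : deriv (deriv μ) 0 = 2 * (∑ j ∈ S, (ψn j) ^ 4) / ∑ j ∈ S, (ψn j) ^ 2 := by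
    rw [eq_div_iff (ne_of_gt hSA)]
    exact hmain
  rw [hμ'']
  exact div_pos (by linarith) hSA
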